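/- Let 0<γ≤1, let b be locally integrable on ℝⁿ, let y ∈ ℝⁿ and r>0, and let f⃗=(f₁,f₂,…) be a sequence of locally integrable functions; set f_j^∞ = f_j·χ_{B(y,2r)^c}. Then there is a constant C>0, independent of b, f⃗, y, r, such that for every x ∈ B(y,r), ( Σ_{j=1}^∞ | S_γ( [b_{B(y,r)} − b] f_j^∞ )(x) |² )^{1/2} ≤ C Σ_{l=1}^∞ (1/|B(y,2^{l+1}r)|) ∫_{B(y,2^{l+1}r)} |b(z) − b_{B(y,r)}| ( Σ_{j=1}^∞ |f_j(z)|² )^{1/2} dz, where b_{B(y,r)} = (1/|B(y,r)|)∫_{B(y,r)} b. -/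

import Mathlib

open MeasureTheory Metric Set
open scoped ENNReal NNReal Real

noncomputable section

/-- Euclidean space `ℝⁿ`. -/
abbrev En (n : ℕ) := EuclideanSpace ℝ (Fin n)

/-- The weighted measure `w(s) = ∫_s w` of a set. -/
def wMeas {n : ℕ} (w : En n → ℝ) (s : Set (En n)) : ℝ≥0∞ :=
  ∫⁻ x in s, ENNReal.ofReal (w x)

/-- A weight: a positive locally integrable function. -/
def IsWeight {n : ℕ} (w : En n → ℝ) : Prop :=
  LocallyIntegrable w volume ∧ ∀ x, 0 < w x

/-- Average of a weight over a ball (lower-integral version). -/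
def ballAvg {n : ℕ} (w : En n → ℝ) (y : En n) (r : ℝ) : ℝ≥0∞ :=
  wMeas w (ball y r) / volume (ball y r)

/-- The Muckenhoupt class `A_p`, `1 < p < ∞`. -/
def IsAp {n : ℕ} (w : En n → ℝ) (p : ℝ) : Prop :=
  IsWeight w ∧ ∃ C : ℝ, 0 < C ∧ ∀ (y : En n) (r : ℝ), 0 < r →
    (ballAvg w y r) ^ (1 / p) *
      (ballAvg (fun x => w x ^ (-(1 / (p - 1)))) y r) ^ (1 - 1 / p) ≤ ENNReal.ofReal C

/-- The Muckenhoupt class `A₁`. -/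
def IsA1 {n : ℕ} (w : En n → ℝ) : Prop :=
  IsWeight w ∧ ∃ C : ℝ, 0 < C ∧ ∀ (y : En n) (r : ℝ), 0 < r →
    ballAvg w y r ≤ ENNReal.ofReal C *
      ENNReal.ofReal (essInf w (volume.restrict (ball y r)))

/-- `A_∞ = ⋃_{1 ≤ p < ∞} A_p`. -/
def IsAinfty {n : ℕ} (w : En n → ℝ) : Prop :=
  IsA1 w ∨ ∃ p : ℝ, 1 < p ∧ IsAp w p

/-- The doubling class `Δ₂`: `μ(2B) ≤ C μ(B)` for all balls. -/
def IsDoubling {n : ℕ} (μ : En n → ℝ) : Prop :=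
  IsWeight μ ∧ ∃ C : ℝ, 0 < C ∧ ∀ (y : En n) (r : ℝ), 0 < r →
    wMeas μ (ball y (2 * r)) ≤ ENNReal.ofReal C * wMeas μ (ball y r)

/-- The family `C_γ` of kernels: supported in the unit ball, mean zero,
`γ`-Hölder with constant 1. -/
def Cfam (n : ℕ) (γ : ℝ) : Set (En n → ℝ) :=
  {φ | Function.support φ ⊆ closedBall 0 1 ∧ (∫ x, φ x) = 0 ∧
    ∀ x x' : En n, |φ x - φ x'| ≤ ‖x - x'‖ ^ γ}

/-- `L¹` dilation `φ_t(y) = t^{-n} φ(y/t)`. -/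
def dil {n : ℕ} (φ : En n → ℝ) (t : ℝ) (y : En n) : ℝ :=
  t ^ (-(n : ℝ)) * φ (t⁻¹ • y)

/-- `A_γ(f)(y,t) = sup_{φ ∈ C_γ} |φ_t * f(y)|`. -/
def Agamma {n : ℕ} (γ : ℝ) (f : En n → ℝ) (y : En n) (t : ℝ) : ℝ :=
  ⨆ φ ∈ Cfam n γ, |∫ z, dil φ t (y - z) * f z|

/-- Square integral of `F(y,t)` over the cone `Γ(x)`, against `dy dt / t^{n+1}`. -/
def coneInt {n : ℕ} (F : En n → ℝ → ℝ) (x : En n) : ℝ≥0∞ :=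
  (∫⁻ p : En n × ℝ,
    Set.indicator {q : En n × ℝ | dist x q.1 < q.2}
      (fun q => ENNReal.ofReal (F q.1 q.2) ^ 2 / ENNReal.ofReal (q.2 ^ ((n : ℝ) + 1))) p)
    ^ (1 / 2 : ℝ)

/-- The intrinsic square function `S_γ(f)`. -/
def Sgamma {n : ℕ} (γ : ℝ) (f : En n → ℝ) (x : En n) : ℝ≥0∞ :=
  coneInt (Agamma γ f) x

/-- `(Σ_j |S_γ(f_j)(x)|²)^{1/2}`. -/
def Sl2 {n : ℕ} (γ : ℝ) (f : ℕ → En n → ℝ) (x : En n) : ℝ≥0∞ :=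
  (∑' j, Sgamma γ (f j) x ^ 2) ^ (1 / 2 : ℝ)

/-- `‖f⃗(x)‖_{ℓ²} = (Σ_j |f_j(x)|²)^{1/2}`. -/
def l2 {n : ℕ} (f : ℕ → En n → ℝ) (x : En n) : ℝ≥0∞ :=
  (∑' j, ENNReal.ofReal |f j x| ^ 2) ^ (1 / 2 : ℝ)

/-- Weighted `L^p` norm of an `ℝ≥0∞`-valued function (`p` finite). -/
def wLp {n : ℕ} (w : En n → ℝ) (p : ℝ) (g : En n → ℝ≥0∞) : ℝ≥0∞ :=
  (∫⁻ x, g x ^ p * ENNReal.ofReal (w x)) ^ (1 / p)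

/-- Weighted `L^p` norm restricted to a set. -/
def wLpOn {n : ℕ} (w : En n → ℝ) (p : ℝ) (s : Set (En n)) (g : En n → ℝ≥0∞) : ℝ≥0∞ :=
  (∫⁻ x in s, g x ^ p * ENNReal.ofReal (w x)) ^ (1 / p)

/-- Weighted weak `L^p` quasi-norm. -/
def wWeakLp {n : ℕ} (w : En n → ℝ) (p : ℝ) (g : En n → ℝ≥0∞) : ℝ≥0∞ :=
  ⨆ (lam : ℝ) (_ : 0 < lam),
    ENNReal.ofReal lam * wMeas w {x | ENNReal.ofReal lam < g x} ^ (1 / p)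

/-- Weighted weak `L^p` quasi-norm restricted to a set. -/
def wWeakLpOn {n : ℕ} (w : En n → ℝ) (p : ℝ) (s : Set (En n)) (g : En n → ℝ≥0∞) : ℝ≥0∞ :=
  ⨆ (lam : ℝ) (_ : 0 < lam),
    ENNReal.ofReal lam * wMeas w {x | x ∈ s ∧ ENNReal.ofReal lam < g x} ^ (1 / p)

/-- `L^q` norm (with exponent `q ∈ (0,∞]`, usual modification at `∞`) of an
`ℝ≥0∞`-valued function with respect to a measure. -/
def lqNorm {n : ℕ} (ν : Measure (En n)) (q : ℝ≥0∞) (F : En n → ℝ≥0∞) : ℝ≥0∞ :=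
  if q = ∞ then essSup F ν else (∫⁻ y, F y ^ q.toReal ∂ν) ^ (1 / q.toReal)

/-- The measure `μ(y) dy`. -/
def muDens {n : ℕ} (μ : En n → ℝ) : Measure (En n) :=
  volume.withDensity fun y => ENNReal.ofReal (μ y)

/-- The weighted amalgam norm `‖·‖_{(L^p,L^q)^α(w;μ)}`. -/
def amalgamNorm {n : ℕ} (w μ : En n → ℝ) (p α : ℝ) (q : ℝ≥0∞) (g : En n → ℝ≥0∞) : ℝ≥0∞ :=
  ⨆ (r : ℝ) (_ : 0 < r),
    lqNorm (muDens μ) q fun y =>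
      wMeas w (ball y r) ^ (1 / α - 1 / p - (q⁻¹).toReal) * wLpOn w p (ball y r) g

/-- The weighted weak amalgam norm `‖·‖_{(WL^p,L^q)^α(w;μ)}`. -/
def amalgamWeakNorm {n : ℕ} (w μ : En n → ℝ) (p α : ℝ) (q : ℝ≥0∞) (g : En n → ℝ≥0∞) : ℝ≥0∞ :=
  ⨆ (r : ℝ) (_ : 0 < r),
    lqNorm (muDens μ) q fun y =>
      wMeas w (ball y r) ^ (1 / α - 1 / p - (q⁻¹).toReal) * wWeakLpOn w p (ball y r) g

/-- `sup_{φ ∈ C_γ} |∫ [b(x) - b(z)] φ_t(y-z) f(z) dz|`. -/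
def AgammaComm {n : ℕ} (γ : ℝ) (b f : En n → ℝ) (x y : En n) (t : ℝ) : ℝ :=
  ⨆ φ ∈ Cfam n γ, |∫ z, (b x - b z) * dil φ t (y - z) * f z|

/-- The commutator `[b, S_γ](f)`. -/
def commS {n : ℕ} (γ : ℝ) (b f : En n → ℝ) (x : En n) : ℝ≥0∞ :=
  coneInt (AgammaComm γ b f x) x

/-- `(Σ_j |[b,S_γ](f_j)(x)|²)^{1/2}`. -/
def commSl2 {n : ℕ} (γ : ℝ) (b : En n → ℝ) (f : ℕ → En n → ℝ) (x : En n) : ℝ≥0∞ :=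
  (∑' j, commS γ b (f j) x ^ 2) ^ (1 / 2 : ℝ)

/-- Average of `b` over the ball `B(y,r)`. -/
def ballAvgF {n : ℕ} (b : En n → ℝ) (y : En n) (r : ℝ) : ℝ :=
  ⨍ x in ball y r, b x

/-- `b ∈ BMO(ℝⁿ)` with `‖b‖_* ≤ M` (over balls). -/
def IsBMOwith {n : ℕ} (b : En n → ℝ) (M : ℝ) : Prop :=
  LocallyIntegrable b volume ∧
  ∀ (y : En n) (r : ℝ), 0 < r →
    (⨍ x in ball y r, |b x - ballAvgF b y r|) ≤ M

/-- The Young function `Φ(t) = t(1 + log⁺ t)` on `ℝ≥0∞`. -/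
def PhiE (t : ℝ≥0∞) : ℝ≥0∞ :=
  t * (1 + ENNReal.ofReal (max (Real.log t.toReal) 0))

/-- Weighted Luxemburg norm `‖g‖_{L log L(w), s}`. -/
def luxLlogL {n : ℕ} (w : En n → ℝ) (s : Set (En n)) (g : En n → ℝ≥0∞) : ℝ≥0∞ :=
  sInf {c : ℝ≥0∞ | 0 < c ∧ c ≠ ∞ ∧
    (∫⁻ x in s, PhiE (g x / c) * ENNReal.ofReal (w x)) ≤ wMeas w s}

/-- The weighted amalgam norm of `L log L` type, `‖·‖_{(L log L, L^q)^α(w;μ)}`. -/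
def amalgamLlogL {n : ℕ} (w μ : En n → ℝ) (α : ℝ) (q : ℝ≥0∞) (g : En n → ℝ≥0∞) : ℝ≥0∞ :=
  ⨆ (r : ℝ) (_ : 0 < r),
    lqNorm (muDens μ) q fun y =>
      wMeas w (ball y r) ^ (1 / α - (q⁻¹).toReal) * luxLlogL w (ball y r) g

/-- The centered Hardy–Littlewood maximal function. -/
def HLmax {n : ℕ} (w : En n → ℝ) (x : En n) : ℝ≥0∞ :=
  ⨆ (r : ℝ) (_ : 0 < r), ballAvg (fun z => |w z|) x r

/-- Axis-parallel cube with center `c` and side length `L`. -/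
def cube {n : ℕ} (c : En n) (L : ℝ) : Set (En n) := {x | ∀ i, |x i - c i| ≤ L / 2}

/-- Average of `b` over the cube of center `c` and side `L`. -/
def cubeAvgF {n : ℕ} (b : En n → ℝ) (c : En n) (L : ℝ) : ℝ :=
  ⨍ x in cube c L, b x

/-- `b ∈ BMO(ℝⁿ)` with `‖b‖_* ≤ M` (over cubes). -/
def IsBMOcubeWith {n : ℕ} (b : En n → ℝ) (M : ℝ) : Prop :=
  LocallyIntegrable b volume ∧
  ∀ (c : En n) (L : ℝ), 0 < L →
    (⨍ x in cube c L, |b x - cubeAvgF b c L|) ≤ M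

/-- Weighted Luxemburg norm `‖g‖_{exp L(w), s}` for the Young function `e^t - 1`. -/
def luxExpL {n : ℕ} (w : En n → ℝ) (s : Set (En n)) (g : En n → ℝ) : ℝ≥0∞ :=
  sInf ((fun σ : ℝ => ENNReal.ofReal σ) ''
    {σ : ℝ | 0 < σ ∧
      (∫⁻ x in s, ENNReal.ofReal (Real.exp (|g x| / σ) - 1) * ENNReal.ofReal (w x))
        ≤ wMeas w s})

/-- `sup_{φ ∈ C_γ} |φ_t * g(y)|` for a complex-valued `g`. -/
def AgammaC {n : ℕ} (γ : ℝ) (g : En n → ℂ) (y : En n) (t : ℝ) : ℝ :=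
  ⨆ φ ∈ Cfam n γ, ‖∫ z, (dil φ t (y - z) : ℂ) * g z‖

/-- The intrinsic square function of a complex-valued function. -/
def SgammaC {n : ℕ} (γ : ℝ) (g : En n → ℂ) (x : En n) : ℝ≥0∞ :=
  coneInt (AgammaC γ g) x



section AuxLemmas

open scoped NNReal

lemma ennreal_sq_rpow_half (x : ℝ≥0∞) : (x ^ (1/2 : ℝ)) ^ 2 = x := by
  rw [← ENNReal.rpow_natCast _ 2, ← ENNReal.rpow_mul]; norm_num

lemma ennreal_rpow_half_sq (x : ℝ≥0∞) : (x ^ 2) ^ (1/2 : ℝ) = x := by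
  rw [← ENNReal.rpow_natCast x 2, ← ENNReal.rpow_mul]; norm_num

lemma ennreal_sq_div_self_le (x : ℝ≥0∞) : x ^ 2 / x ≤ x := by
  rcases eq_or_ne x 0 with h | h
  · simp [h]
  rcases eq_or_ne x ⊤ with h2 | h2
  · simp [h2]
  · rw [sq, mul_div_assoc, ENNReal.div_self h h2, mul_one]

lemma l2_sq {n : ℕ} (f : ℕ → En n → ℝ) (z : En n) :
    l2 f z ^ 2 = ∑' j, ENNReal.ofReal |f j z| ^ 2 := by
  rw [l2, ennreal_sq_rpow_half]

lemma ofReal_abs_le_l2 {n : ℕ} (f : ℕ → En n → ℝ) (j : ℕ) (z : En n) :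
    ENNReal.ofReal |f j z| ≤ l2 f z := by
  have h1 : ENNReal.ofReal |f j z| ^ 2 ≤ ∑' i, ENNReal.ofReal |f i z| ^ 2 :=
    ENNReal.le_tsum j
  calc ENNReal.ofReal |f j z| = (ENNReal.ofReal |f j z| ^ 2) ^ (1/2 : ℝ) :=
        (ennreal_rpow_half_sq _).symm
    _ ≤ (∑' i, ENNReal.ofReal |f i z| ^ 2) ^ (1/2 : ℝ) := ENNReal.rpow_le_rpow h1 (by norm_num)
    _ = l2 f z := rfl

lemma tsum_sq_le_sq_tsum (a : ℕ → ℝ≥0∞) : ∑' l, a l ^ 2 ≤ (∑' l, a l) ^ 2 := by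
  calc ∑' l, a l ^ 2 ≤ ∑' l, a l * ∑' k, a k := by
        refine ENNReal.tsum_le_tsum fun l => ?_
        rw [sq]; exact mul_le_mul_right (ENNReal.le_tsum l) _
    _ = (∑' l, a l) ^ 2 := by rw [ENNReal.tsum_mul_right, sq]

lemma support_phi {n : ℕ} {γ : ℝ} {φ : En n → ℝ} (hφ : φ ∈ Cfam n γ)
    {v : En n} (hv : 1 < ‖v‖) : φ v = 0 := by
  by_contra h
  have hmem : v ∈ closedBall (0 : En n) 1 := hφ.1 h
  rw [mem_closedBall, dist_zero_right] at hmem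
  linarith

lemma phi_abs_le {n : ℕ} {γ : ℝ} (hγ0 : 0 < γ) (hγ1 : γ ≤ 1) [Nontrivial (En n)]
    {φ : En n → ℝ} (hφ : φ ∈ Cfam n γ) (v : En n) : |φ v| ≤ 3 := by
  rcases le_or_gt ‖v‖ 1 with hv | hv
  · obtain ⟨e, he⟩ := exists_norm_eq (En n) (by norm_num : (0:ℝ) ≤ 3)
    have hout : φ (v + e) = 0 := by
      apply support_phi hφ
      have h1 : ‖e‖ ≤ ‖v + e‖ + ‖v‖ := by
        have := norm_sub_le (v + e) v
        simpa only [add_sub_cancel_left] using this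
      rw [he] at h1; linarith
    have hH := hφ.2.2 v (v + e)
    rw [hout, sub_zero] at hH
    have hnorm : ‖v - (v + e)‖ = 3 := by
      rw [show v - (v + e) = -e by abel, norm_neg, he]
    rw [hnorm] at hH
    calc |φ v| ≤ (3:ℝ) ^ γ := hH
      _ ≤ (3:ℝ) ^ (1:ℝ) := Real.rpow_le_rpow_of_exponent_le (by norm_num) hγ1
      _ = 3 := Real.rpow_one 3
  · rw [support_phi hφ hv, abs_zero]; norm_num

lemma dil_eq_zero {n : ℕ} {γ : ℝ} {φ : En n → ℝ} (hφ : φ ∈ Cfam n γ)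
    {t : ℝ} (ht : 0 < t) {u : En n} (hu : t < ‖u‖) : dil φ t u = 0 := by
  have h0 : φ (t⁻¹ • u) = 0 := by
    apply support_phi hφ
    rw [norm_smul, norm_inv, Real.norm_eq_abs, abs_of_pos ht]
    rw [show (1:ℝ) = t⁻¹ * t by field_simp]
    exact mul_lt_mul_of_pos_left hu (inv_pos.mpr ht)
  rw [dil, h0, mul_zero]

lemma dil_abs_le {n : ℕ} {γ : ℝ} (hγ0 : 0 < γ) (hγ1 : γ ≤ 1) [Nontrivial (En n)]
    {φ : En n → ℝ} (hφ : φ ∈ Cfam n γ) {t : ℝ} (ht : 0 < t) (u : En n) :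
    |dil φ t u| ≤ 3 * t ^ (-(n:ℝ)) := by
  rw [dil, abs_mul, abs_of_nonneg (Real.rpow_nonneg ht.le _)]
  calc t ^ (-(n:ℝ)) * |φ (t⁻¹ • u)| ≤ t ^ (-(n:ℝ)) * 3 :=
        mul_le_mul_of_nonneg_left (phi_abs_le hγ0 hγ1 hφ _) (Real.rpow_nonneg ht.le _)
    _ = 3 * t ^ (-(n:ℝ)) := mul_comm _ _

lemma agamma_le {n : ℕ} {γ : ℝ} {g : En n → ℝ} {y' : En n} {t : ℝ} {K : ℝ≥0∞}
    (h : ∀ φ ∈ Cfam n γ, (∫⁻ z, ENNReal.ofReal (|dil φ t (y' - z)| * |g z|)) ≤ K) :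
    ENNReal.ofReal (Agamma γ g y' t) ≤ K := by
  rcases eq_or_ne K ⊤ with hK | hK
  · simp [hK]
  have hA : Agamma γ g y' t ≤ K.toReal := by
    refine Real.iSup_le (fun φ => Real.iSup_le (fun hφ => ?_) ENNReal.toReal_nonneg)
      ENNReal.toReal_nonneg
    have h1 : |∫ z, dil φ t (y' - z) * g z| ≤
        (∫⁻ z, ENNReal.ofReal (|dil φ t (y' - z)| * |g z|)).toReal := by
      simpa [Real.norm_eq_abs, abs_mul] using
        MeasureTheory.norm_integral_le_lintegral_norm (μ := volume)
          (fun z => dil φ t (y' - z) * g z)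
    exact h1.trans (ENNReal.toReal_mono hK (h φ hφ))
  calc ENNReal.ofReal (Agamma γ g y' t) ≤ ENNReal.ofReal K.toReal :=
        ENNReal.ofReal_le_ofReal hA
    _ = K := ENNReal.ofReal_toReal hK

lemma sum_sq_lintegral_le {α : Type*} [MeasurableSpace α] (μ : Measure α)
    (q : ℕ → α → ℝ≥0∞) (h : α → ℝ≥0∞)
    (hqm : ∀ j, AEMeasurable (q j) μ) (hhm : AEMeasurable h μ)
    (hsumsq : ∀ z, (∑' j, q j z ^ 2) ≤ h z ^ 2) :
    ∑' j, (∫⁻ z, q j z ∂μ) ^ 2 ≤ (∫⁻ z, h z ∂μ) ^ 2 := by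
  rcases eq_or_ne (∫⁻ z, h z ∂μ) ⊤ with hW | hW
  · rw [hW, ENNReal.top_pow two_ne_zero]; exact le_top
  have hq0 : ∀ j z, h z = 0 → q j z = 0 := by
    intro j z hz
    have h1 : q j z ^ 2 ≤ 0 := by
      calc q j z ^ 2 ≤ ∑' i, q i z ^ 2 := ENNReal.le_tsum j
        _ ≤ h z ^ 2 := hsumsq z
        _ = 0 := by rw [hz]; exact zero_pow two_ne_zero
    have h2 : q j z ^ 2 = 0 := le_antisymm h1 zero_le
    simpa [pow_eq_zero_iff] using h2
  have hfin : ∀ᵐ z ∂μ, h z < ⊤ := MeasureTheory.ae_lt_top' hhm hW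
  have hkey : ∀ j, ∀ᵐ z ∂μ, q j z ≤ h z ^ (1/2:ℝ) * (q j z ^ 2 / h z) ^ (1/2:ℝ) := by
    intro j
    filter_upwards [hfin] with z hz
    rcases eq_or_ne (h z) 0 with h0 | h0
    · rw [hq0 j z h0]; exact zero_le
    · rw [← ENNReal.mul_rpow_of_nonneg _ _ (by norm_num : (0:ℝ) ≤ 1/2),
        ENNReal.mul_div_cancel h0 hz.ne, ennreal_rpow_half_sq]
  have hvm : ∀ j, AEMeasurable (fun z => q j z ^ 2 / h z) μ := fun j =>
    ((hqm j).pow_const 2).div hhm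
  have hWj : ∀ j, (∫⁻ z, q j z ∂μ) ≤
      (∫⁻ z, h z ∂μ) ^ (1/2:ℝ) * (∫⁻ z, q j z ^ 2 / h z ∂μ) ^ (1/2:ℝ) := by
    intro j
    have hconj : Real.HolderConjugate 2 2 := Real.HolderConjugate.two_two
    calc (∫⁻ z, q j z ∂μ) ≤ ∫⁻ z, h z ^ (1/2:ℝ) * (q j z ^ 2 / h z) ^ (1/2:ℝ) ∂μ :=
          lintegral_mono_ae (hkey j)
      _ = ∫⁻ z, ((fun z => h z ^ (1/2:ℝ)) * fun z => (q j z ^ 2 / h z) ^ (1/2:ℝ)) z ∂μ := rfl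
      _ ≤ (∫⁻ z, (h z ^ (1/2:ℝ)) ^ (2:ℝ) ∂μ) ^ (1/(2:ℝ)) *
            (∫⁻ z, ((q j z ^ 2 / h z) ^ (1/2:ℝ)) ^ (2:ℝ) ∂μ) ^ (1/(2:ℝ)) :=
          ENNReal.lintegral_mul_le_Lp_mul_Lq μ hconj
            ((measurable_id'.pow_const _).comp_aemeasurable hhm)
            ((measurable_id'.pow_const _).comp_aemeasurable (hvm j))
      _ = (∫⁻ z, h z ∂μ) ^ (1/2:ℝ) * (∫⁻ z, q j z ^ 2 / h z ∂μ) ^ (1/2:ℝ) := by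
          congr 1
          · congr 1
            refine lintegral_congr fun z => ?_
            rw [← ENNReal.rpow_mul]; norm_num
          · congr 1
            refine lintegral_congr fun z => ?_
            rw [← ENNReal.rpow_mul]; norm_num
  calc ∑' j, (∫⁻ z, q j z ∂μ) ^ 2
      ≤ ∑' j, (∫⁻ z, h z ∂μ) * (∫⁻ z, q j z ^ 2 / h z ∂μ) := by
        refine ENNReal.tsum_le_tsum fun j => ?_
        calc (∫⁻ z, q j z ∂μ) ^ 2
            ≤ ((∫⁻ z, h z ∂μ) ^ (1/2:ℝ) * (∫⁻ z, q j z ^ 2 / h z ∂μ) ^ (1/2:ℝ)) ^ 2 :=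
              pow_le_pow_left' (hWj j) 2
          _ = _ := by rw [mul_pow, ennreal_sq_rpow_half, ennreal_sq_rpow_half]
    _ = (∫⁻ z, h z ∂μ) * ∑' j, (∫⁻ z, q j z ^ 2 / h z ∂μ) := ENNReal.tsum_mul_left
    _ ≤ (∫⁻ z, h z ∂μ) * (∫⁻ z, h z ∂μ) := by
        refine mul_le_mul_right ?_ _
        rw [← lintegral_tsum hvm]
        refine lintegral_mono fun z => ?_
        calc ∑' j, q j z ^ 2 / h z = (∑' j, q j z ^ 2) / h z := by
              simp only [div_eq_mul_inv]; rw [ENNReal.tsum_mul_right]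
          _ ≤ h z ^ 2 / h z := ENNReal.div_le_div_right (hsumsq z) _
          _ ≤ h z := ennreal_sq_div_self_le _
    _ = (∫⁻ z, h z ∂μ) ^ 2 := (sq _).symm

end AuxLemmas

/-- vector-valued pointwise bound for
`S_γ([b_{B(y,r)} - b] f_j^∞)` on `B(y,r)`. -/
theorem vector_intrinsic_square_bmo_far_part_pointwise (n : ℕ) (γ : ℝ)
    (hγ0 : 0 < γ) (hγ1 : γ ≤ 1) :
    ∃ C : ℝ, 0 < C ∧ ∀ (b : En n → ℝ), LocallyIntegrable b volume →
      ∀ f : ℕ → En n → ℝ, (∀ j, LocallyIntegrable (f j) volume) →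
      ∀ (y : En n) (r : ℝ), 0 < r → ∀ x ∈ ball y r,
        Sl2 γ (fun j z =>
            (ballAvgF b y r - b z) * (ball y (2 * r))ᶜ.indicator (f j) z) x ≤
          ENNReal.ofReal C *
            ∑' l : ℕ, (volume (ball y ((2 : ℝ) ^ (l + 2) * r)))⁻¹ *
              ∫⁻ z in ball y ((2 : ℝ) ^ (l + 2) * r),
                ENNReal.ofReal |b z - ballAvgF b y r| * l2 f z := by
  classical
  set κ : ℝ≥0∞ := volume (ball (0 : En n) 1) with hκdef
  have hκt : κ ≠ ⊤ := measure_ball_lt_top.ne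
  set C : ℝ := 3 * 8 ^ n * (κ.toReal ^ 2 + 1) with hCdef
  have hC0 : 0 < C := by rw [hCdef]; positivity
  refine ⟨C, hC0, ?_⟩
  intro b hb f hf y r hr x hx
  set c : ℝ := ballAvgF b y r with hcdef
  set g : ℕ → En n → ℝ := fun j z => (c - b z) * (ball y (2 * r))ᶜ.indicator (f j) z
    with hgdef
  set h : En n → ℝ≥0∞ := fun z => ENNReal.ofReal |b z - c| * l2 f z with hhdef
  rcases subsingleton_or_nontrivial (En n) with hsub | hnt
  · -- trivial case: the whole space is one point, so `g = 0`.
    have hball : ball y (2 * r) = (Set.univ : Set (En n)) :=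
      Set.eq_univ_iff_forall.mpr fun z => by
        rw [mem_ball, Subsingleton.elim z y, dist_self]; positivity
    have hg0 : ∀ j z, g j z = 0 := by
      intro j z
      rw [hgdef]; simp [hball]
    have hS0 : ∀ j, Sgamma γ (g j) x = 0 := by
      intro j
      have hA : ∀ (y' : En n) (t : ℝ), ENNReal.ofReal (Agamma γ (g j) y' t) = 0 := by
        intro y' t
        refine le_antisymm (agamma_le (K := 0) fun φ hφ => le_of_eq ?_) zero_le
        simp [hg0]
      rw [Sgamma, coneInt]
      have hzero : ∀ p : En n × ℝ, Set.indicator {q : En n × ℝ | dist x q.1 < q.2}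
          (fun q => ENNReal.ofReal (Agamma γ (g j) q.1 q.2) ^ 2 /
            ENNReal.ofReal (q.2 ^ ((n : ℝ) + 1))) p = 0 := by
        intro p
        rw [Set.indicator_apply]
        split
        · rw [hA, zero_pow two_ne_zero, ENNReal.zero_div]
        · rfl
      rw [lintegral_congr hzero, lintegral_zero, ENNReal.zero_rpow_of_pos (by norm_num)]
    rw [Sl2]
    simp only [hS0, zero_pow two_ne_zero, tsum_zero,
      ENNReal.zero_rpow_of_pos (by norm_num : (0:ℝ) < 1/2)]
    exact zero_le
  -- main case
  have hx' : dist x y < r := mem_ball.mp hx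
  have hrpos2 : 0 < r / 2 := by positivity
  set R : ℕ → ℝ := fun l => 2 ^ (l + 2) * r with hRdef
  set s : ℕ → ℝ := fun l => 2 ^ l * (r / 2) with hsdef
  have hs0 : ∀ l, 0 < s l := fun l => by rw [hsdef]; positivity
  have hR0 : ∀ l, 0 < R l := fun l => by rw [hRdef]; positivity
  have hR8 : ∀ l, R l = 8 * s l := fun l => by
    rw [hRdef, hsdef]; simp only; rw [pow_succ, pow_succ]; ring
  have hR4 : ∀ l, 4 * s (l + 1) = R l := fun l => by
    rw [hRdef, hsdef]; simp only; rw [pow_succ, pow_succ, pow_succ]; ring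
  -- step A : the key pointwise estimate inside the cone
  have keyA : ∀ (j : ℕ) (y' : En n) (t : ℝ), dist x y' < t →
      ENNReal.ofReal (Agamma γ (g j) y' t) ≤ (Set.Ioi (r/2)).indicator
        (fun u => ENNReal.ofReal (3 * u ^ (-(n:ℝ))) *
          ∫⁻ z in ball y (4*u), ENNReal.ofReal |g j z|) t := by
    intro j y' t hty
    have ht0 : 0 < t := lt_of_le_of_lt dist_nonneg hty
    have hgz_out : ∀ z : En n, g j z ≠ 0 → 2*r ≤ dist z y := by
      intro z hz
      have hind : (ball y (2*r))ᶜ.indicator (f j) z ≠ 0 := by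
        intro h0
        apply hz
        rw [hgdef]; simp only; rw [h0, mul_zero]
      have hmem : z ∈ (ball y (2*r))ᶜ := (Set.indicator_apply_ne_zero.mp hind).1
      rw [Set.mem_compl_iff, mem_ball, not_lt] at hmem
      exact hmem
    by_cases hrt : r/2 < t
    · rw [Set.indicator_of_mem (Set.mem_Ioi.mpr hrt)]
      refine agamma_le fun φ hφ => ?_
      have hpt : ∀ z, ENNReal.ofReal (|dil φ t (y' - z)| * |g j z|) ≤
          (ball y (4*t)).indicator
            (fun z => ENNReal.ofReal (3 * t ^ (-(n:ℝ))) * ENNReal.ofReal |g j z|) z := by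
        intro z
        by_cases hz : z ∈ ball y (4*t)
        · rw [Set.indicator_of_mem hz, ← ENNReal.ofReal_mul (by positivity)]
          exact ENNReal.ofReal_le_ofReal
            (mul_le_mul_of_nonneg_right (dil_abs_le hγ0 hγ1 hφ ht0 _) (abs_nonneg _))
        · rw [Set.indicator_of_notMem hz]
          have hdil : dil φ t (y' - z) = 0 := by
            apply dil_eq_zero hφ ht0
            rw [← dist_eq_norm]
            rw [mem_ball, not_lt] at hz
            have tri := dist_triangle4 z y' x y
            have h1 : dist y' z = dist z y' := dist_comm _ _
            have h2 : dist y' x = dist x y' := dist_comm _ _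
            linarith
          rw [hdil, abs_zero, zero_mul, ENNReal.ofReal_zero]
      calc (∫⁻ z, ENNReal.ofReal (|dil φ t (y' - z)| * |g j z|)) ≤
            ∫⁻ z, (ball y (4*t)).indicator
              (fun z => ENNReal.ofReal (3 * t ^ (-(n:ℝ))) * ENNReal.ofReal |g j z|) z :=
            lintegral_mono hpt
        _ = ∫⁻ z in ball y (4*t), ENNReal.ofReal (3 * t ^ (-(n:ℝ))) * ENNReal.ofReal |g j z| :=
            lintegral_indicator measurableSet_ball _
        _ = ENNReal.ofReal (3 * t ^ (-(n:ℝ))) * ∫⁻ z in ball y (4*t), ENNReal.ofReal |g j z| :=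
            lintegral_const_mul' _ _ ENNReal.ofReal_ne_top
    · rw [Set.indicator_of_notMem (by simpa using hrt)]
      refine agamma_le (K := 0) fun φ hφ => le_of_eq ?_
      have hzz : ∀ z, |dil φ t (y' - z)| * |g j z| = 0 := by
        intro z
        by_cases hgz : g j z = 0
        · rw [hgz, abs_zero, mul_zero]
        · have h2r := hgz_out z hgz
          have hdil : dil φ t (y' - z) = 0 := by
            apply dil_eq_zero hφ ht0
            rw [← dist_eq_norm]
            have tri := dist_triangle4 z y' x y
            have h1 : dist y' z = dist z y' := dist_comm _ _
            have h2 : dist y' x = dist x y' := dist_comm _ _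
            push_neg at hrt
            linarith
          rw [hdil, abs_zero, zero_mul]
      simp only [hzz, ENNReal.ofReal_zero, lintegral_zero]
  -- step B : cone integral estimate, separately for each j
  have coneB : ∀ j : ℕ, Sgamma γ (g j) x ^ 2 ≤
      ∑' l : ℕ, ENNReal.ofReal 9 * κ * ENNReal.ofReal ((s l) ^ (-(2*(n:ℝ)))) *
        (∫⁻ z in ball y (R l), ENNReal.ofReal |g j z|) ^ 2 := by
    intro j
    set Wq : ℝ → ℝ≥0∞ := fun u => ∫⁻ z in ball y u, ENNReal.ofReal |g j z| with hWqdef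
    have hWqmono : Monotone Wq := fun u1 u2 h12 => lintegral_mono_set (ball_subset_ball h12)
    set F : ℝ → ℝ≥0∞ := fun u =>
      ((Set.Ioi (r/2)).indicator (fun v => ENNReal.ofReal (3 * v ^ (-(n:ℝ))) * Wq (4*v)) u) ^ 2 /
        ENNReal.ofReal (u ^ ((n : ℝ) + 1)) with hFdef
    have hFm : Measurable F := by
      apply Measurable.div
      · apply Measurable.pow_const
        apply Measurable.indicator _ measurableSet_Ioi
        apply Measurable.mul
        · exact ENNReal.measurable_ofReal.comp ((measurable_id.pow_const _).const_mul 3)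
        · have hm : Monotone (fun v : ℝ => Wq (4*v)) := fun u1 u2 h12 =>
            hWqmono (by linarith)
          exact hm.measurable
      · exact ENNReal.measurable_ofReal.comp (measurable_id.pow_const _)
    have hSm : MeasurableSet {q : En n × ℝ | dist x q.1 < q.2} :=
      (isOpen_lt (continuous_const.dist continuous_fst) continuous_snd).measurableSet
    have step1 : Sgamma γ (g j) x ^ 2 ≤ ∫⁻ p : En n × ℝ,
        Set.indicator {q : En n × ℝ | dist x q.1 < q.2} (fun p => F p.2) p := by
      rw [Sgamma, coneInt, ennreal_sq_rpow_half]
      refine lintegral_mono fun p => ?_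
      rw [Set.indicator_apply, Set.indicator_apply]
      split
      case isTrue hp =>
        rw [hFdef]
        exact ENNReal.div_le_div_right (pow_le_pow_left' (keyA j p.1 p.2 hp) 2) _
      case isFalse => exact le_rfl
    have step2 : (∫⁻ p : En n × ℝ,
        Set.indicator {q : En n × ℝ | dist x q.1 < q.2} (fun p => F p.2) p) =
        ∫⁻ t : ℝ, F t * volume (ball x t) := by
      have hmeas : Measurable fun p : En n × ℝ =>
          Set.indicator {q : En n × ℝ | dist x q.1 < q.2} (fun p => F p.2) p :=
        (hFm.comp measurable_snd).indicator hSm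
      rw [MeasureTheory.Measure.volume_eq_prod, lintegral_prod_symm _ hmeas.aemeasurable]
      refine lintegral_congr fun t => ?_
      calc (∫⁻ y'', Set.indicator {q : En n × ℝ | dist x q.1 < q.2} (fun p => F p.2) (y'', t))
          = ∫⁻ y'', (ball x t).indicator (fun _ => F t) y'' :=
            lintegral_congr fun y'' => by
              simp only [Set.indicator_apply, Set.mem_setOf_eq, mem_ball, dist_comm]
        _ = F t * volume (ball x t) := by
            rw [lintegral_indicator measurableSet_ball, setLIntegral_const]
    have step3 : (∫⁻ t : ℝ, F t * volume (ball x t)) =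
        ∫⁻ t in Set.Ioi (r/2), F t * volume (ball x t) := by
      rw [← lintegral_indicator measurableSet_Ioi]
      refine lintegral_congr fun t => ?_
      rw [Set.indicator_apply]
      split
      case isTrue => rfl
      case isFalse ht =>
        rw [hFdef]; simp only
        rw [Set.indicator_of_notMem ht, zero_pow two_ne_zero, ENNReal.zero_div, zero_mul]
    have step5 : (∫⁻ t in Set.Ioi (r/2), F t * volume (ball x t)) ≤
        ∫⁻ t in Set.Ioi (r/2),
          ENNReal.ofReal 9 * κ * Wq (4*t) ^ 2 * ENNReal.ofReal (t ^ (-(2*(n:ℝ)) - 1)) := by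
      refine setLIntegral_mono' measurableSet_Ioi fun t ht => ?_
      have ht0 : 0 < t := lt_trans hrpos2 (Set.mem_Ioi.mp ht)
      have hvol : volume (ball x t) = ENNReal.ofReal (t ^ (n:ℝ)) * κ := by
        rw [Measure.addHaar_ball volume x ht0.le, finrank_euclideanSpace_fin,
          ← Real.rpow_natCast t n]
      rw [hFdef]; simp only
      rw [Set.indicator_of_mem ht, hvol, mul_pow]
      have e1 : ENNReal.ofReal (3 * t ^ (-(n:ℝ))) ^ 2 =
          ENNReal.ofReal ((3 * t ^ (-(n:ℝ))) ^ 2) := (ENNReal.ofReal_pow (by positivity) 2).symm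
      rw [e1]
      have hcomb : ENNReal.ofReal ((3 * t ^ (-(n:ℝ))) ^ 2) * ENNReal.ofReal (t ^ (n:ℝ)) /
          ENNReal.ofReal (t ^ ((n:ℝ)+1)) = ENNReal.ofReal (9 * t ^ (-(2*(n:ℝ)) - 1)) := by
        rw [← ENNReal.ofReal_mul (by positivity),
          ← ENNReal.ofReal_div_of_pos (Real.rpow_pos_of_pos ht0 _)]
        congr 1
        rw [mul_pow, ← Real.rpow_natCast (t ^ (-(n:ℝ))) 2, ← Real.rpow_mul ht0.le,
          mul_assoc, ← Real.rpow_add ht0, div_eq_mul_inv, ← Real.rpow_neg ht0.le,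
          mul_assoc, ← Real.rpow_add ht0]
        norm_num
        ring_nf
      calc ENNReal.ofReal ((3 * t ^ (-(n:ℝ))) ^ 2) * Wq (4*t) ^ 2 /
            ENNReal.ofReal (t ^ ((n:ℝ)+1)) * (ENNReal.ofReal (t ^ (n:ℝ)) * κ)
          = (ENNReal.ofReal ((3 * t ^ (-(n:ℝ))) ^ 2) * ENNReal.ofReal (t ^ (n:ℝ)) /
              ENNReal.ofReal (t ^ ((n:ℝ)+1))) * (Wq (4*t) ^ 2 * κ) := by
            rw [div_eq_mul_inv, div_eq_mul_inv]; ring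
        _ = ENNReal.ofReal (9 * t ^ (-(2*(n:ℝ)) - 1)) * (Wq (4*t) ^ 2 * κ) := by rw [hcomb]
        _ = ENNReal.ofReal 9 * κ * Wq (4*t) ^ 2 * ENNReal.ofReal (t ^ (-(2*(n:ℝ)) - 1)) := by
            rw [ENNReal.ofReal_mul (by norm_num)]; ring
        _ ≤ ENNReal.ofReal 9 * κ * Wq (4*t) ^ 2 * ENNReal.ofReal (t ^ (-(2*(n:ℝ)) - 1)) := le_rfl
    have hcover : Set.Ioi (r/2) ⊆ ⋃ l : ℕ, Set.Ioc (s l) (s (l+1)) := by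
      intro t ht
      rw [Set.mem_Ioi] at ht
      have hex : ∃ k, t ≤ s k := by
        obtain ⟨k, hk⟩ := pow_unbounded_of_one_lt (t / (r/2)) one_lt_two
        refine ⟨k, ?_⟩
        rw [hsdef]; simp only
        rw [div_lt_iff₀ hrpos2] at hk
        exact hk.le
      have hk0 : t ≤ s (Nat.find hex) := Nat.find_spec hex
      have hk0pos : Nat.find hex ≠ 0 := by
        intro h0
        rw [h0, hsdef] at hk0
        simp only [pow_zero, one_mul] at hk0
        linarith
      obtain ⟨m, hm⟩ := Nat.exists_eq_succ_of_ne_zero hk0pos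
      have hlt : s m < t := by
        by_contra hcon
        push_neg at hcon
        exact Nat.find_min hex (by rw [hm]; exact Nat.lt_succ_self m) hcon
      refine Set.mem_iUnion.mpr ⟨m, Set.mem_Ioc.mpr ⟨hlt, ?_⟩⟩
      rw [show m + 1 = Nat.find hex from hm.symm]
      exact hk0
    have step6 : (∫⁻ t in Set.Ioi (r/2),
        ENNReal.ofReal 9 * κ * Wq (4*t) ^ 2 * ENNReal.ofReal (t ^ (-(2*(n:ℝ)) - 1))) ≤
        ∑' l : ℕ, ∫⁻ t in Set.Ioc (s l) (s (l+1)),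
          ENNReal.ofReal 9 * κ * Wq (4*t) ^ 2 * ENNReal.ofReal (t ^ (-(2*(n:ℝ)) - 1)) :=
      le_trans (lintegral_mono_set hcover) (lintegral_iUnion_le _ _)
    have step7 : ∀ l : ℕ, (∫⁻ t in Set.Ioc (s l) (s (l+1)),
        ENNReal.ofReal 9 * κ * Wq (4*t) ^ 2 * ENNReal.ofReal (t ^ (-(2*(n:ℝ)) - 1))) ≤
        ENNReal.ofReal 9 * κ * ENNReal.ofReal ((s l) ^ (-(2*(n:ℝ)))) * Wq (R l) ^ 2 := by
      intro l
      have hsl1 : s (l+1) - s l = s l := by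
        rw [hsdef]; simp only; rw [pow_succ]; ring
      calc (∫⁻ t in Set.Ioc (s l) (s (l+1)),
            ENNReal.ofReal 9 * κ * Wq (4*t) ^ 2 * ENNReal.ofReal (t ^ (-(2*(n:ℝ)) - 1))) ≤
          ∫⁻ _ in Set.Ioc (s l) (s (l+1)),
            ENNReal.ofReal 9 * κ * Wq (R l) ^ 2 * ENNReal.ofReal ((s l) ^ (-(2*(n:ℝ)) - 1)) := by
            refine setLIntegral_mono' measurableSet_Ioc fun t ht => ?_
            obtain ⟨ht1, ht2⟩ := ht
            have hWle : Wq (4*t) ≤ Wq (R l) := by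
              rw [← hR4 l]
              exact hWqmono (by linarith)
            have hple : ENNReal.ofReal (t ^ (-(2*(n:ℝ)) - 1)) ≤
                ENNReal.ofReal ((s l) ^ (-(2*(n:ℝ)) - 1)) :=
              ENNReal.ofReal_le_ofReal
                (Real.rpow_le_rpow_of_nonpos (hs0 l) ht1.le
                  (by have hn : (0:ℝ) ≤ (n:ℝ) := Nat.cast_nonneg n; linarith))
            exact mul_le_mul' (mul_le_mul_right (pow_le_pow_left' hWle 2) _) hple
        _ = ENNReal.ofReal 9 * κ * Wq (R l) ^ 2 * ENNReal.ofReal ((s l) ^ (-(2*(n:ℝ)) - 1)) *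
              volume (Set.Ioc (s l) (s (l+1))) := setLIntegral_const _ _
        _ = ENNReal.ofReal 9 * κ * ENNReal.ofReal ((s l) ^ (-(2*(n:ℝ)))) * Wq (R l) ^ 2 := by
            rw [Real.volume_Ioc, hsl1, mul_assoc,
              ← ENNReal.ofReal_mul (Real.rpow_nonneg (hs0 l).le _)]
            rw [show (s l) ^ (-(2*(n:ℝ)) - 1) * s l = (s l) ^ (-(2*(n:ℝ))) by
              nth_rewrite 2 [show s l = s l ^ (1:ℝ) from (Real.rpow_one _).symm]
              rw [← Real.rpow_add (hs0 l)]; norm_num]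
            ring
    calc Sgamma γ (g j) x ^ 2 ≤ _ := step1
      _ = _ := step2
      _ = _ := step3
      _ ≤ _ := step5
      _ ≤ _ := step6
      _ ≤ ∑' l : ℕ, ENNReal.ofReal 9 * κ * ENNReal.ofReal ((s l) ^ (-(2*(n:ℝ)))) *
            Wq (R l) ^ 2 := ENNReal.tsum_le_tsum step7
  -- measurability of the data
  have hbm : AEMeasurable b volume := hb.aestronglyMeasurable.aemeasurable
  have hfm : ∀ j, AEMeasurable (f j) volume := fun j => (hf j).aestronglyMeasurable.aemeasurable
  have hgm : ∀ j, AEMeasurable (fun z => ENNReal.ofReal |g j z|) volume := by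
    intro j
    have hgj : AEMeasurable (g j) volume :=
      (aemeasurable_const.sub hbm).mul ((hfm j).indicator measurableSet_ball.compl)
    exact ENNReal.measurable_ofReal.comp_aemeasurable
      (continuous_abs.measurable.comp_aemeasurable hgj)
  have habs : AEMeasurable (fun z => ENNReal.ofReal |b z - c|) volume :=
    ENNReal.measurable_ofReal.comp_aemeasurable
      (continuous_abs.measurable.comp_aemeasurable (hbm.sub aemeasurable_const))
  have hl2m : AEMeasurable (l2 f) volume := by
    have h1 : ∀ j, AEMeasurable (fun z => ENNReal.ofReal |f j z| ^ 2) volume := fun j =>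
      (ENNReal.measurable_ofReal.comp_aemeasurable
        (continuous_abs.measurable.comp_aemeasurable (hfm j))).pow_const 2
    exact (measurable_id'.pow_const _).comp_aemeasurable (AEMeasurable.ennreal_tsum h1)
  have hhm : AEMeasurable h volume := habs.mul hl2m
  have hsumsq : ∀ z, (∑' j, ENNReal.ofReal |g j z| ^ 2) ≤ h z ^ 2 := by
    intro z
    have hle : ∀ j, ENNReal.ofReal |g j z| ≤
        ENNReal.ofReal |b z - c| * ENNReal.ofReal |f j z| := by
      intro j
      rw [hgdef]; simp only
      rw [abs_mul, abs_sub_comm c (b z), ENNReal.ofReal_mul (abs_nonneg _)]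
      refine mul_le_mul_right (ENNReal.ofReal_le_ofReal ?_) _
      simpa [Real.norm_eq_abs] using norm_indicator_le_norm_self (f j) z
    calc (∑' j, ENNReal.ofReal |g j z| ^ 2)
        ≤ ∑' j, ENNReal.ofReal |b z - c| ^ 2 * ENNReal.ofReal |f j z| ^ 2 := by
          refine ENNReal.tsum_le_tsum fun j => ?_
          rw [← mul_pow]
          exact pow_le_pow_left' (hle j) 2
      _ = ENNReal.ofReal |b z - c| ^ 2 * ∑' j, ENNReal.ofReal |f j z| ^ 2 :=
          ENNReal.tsum_mul_left
      _ = h z ^ 2 := by rw [hhdef]; simp only; rw [mul_pow, l2_sq]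
  have hHold : ∀ l : ℕ, (∑' j, (∫⁻ z in ball y (R l), ENNReal.ofReal |g j z|) ^ 2) ≤
      (∫⁻ z in ball y (R l), h z) ^ 2 := fun l =>
    sum_sq_lintegral_le _ _ h (fun j => (hgm j).restrict) hhm.restrict hsumsq
  -- the constants
  have hconst : ∀ l : ℕ, ENNReal.ofReal 9 * κ * ENNReal.ofReal ((s l) ^ (-(2*(n:ℝ)))) ≤
      ENNReal.ofReal (C ^ 2) * ((volume (ball y (R l)))⁻¹) ^ 2 := by
    intro l
    have hV : volume (ball y (R l)) = ENNReal.ofReal ((R l) ^ n) * κ := by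
      rw [Measure.addHaar_ball volume y (hR0 l).le, finrank_euclideanSpace_fin]
    have hVne : volume (ball y (R l)) ≠ 0 := (measure_ball_pos volume y (hR0 l)).ne'
    have hVnt : volume (ball y (R l)) ≠ ⊤ := measure_ball_lt_top.ne
    have hXV : ENNReal.ofReal 9 * κ * ENNReal.ofReal ((s l) ^ (-(2*(n:ℝ)))) *
        (volume (ball y (R l))) ^ 2 ≤ ENNReal.ofReal (C ^ 2) := by
      rw [hV, mul_pow, ← ENNReal.ofReal_pow (by positivity)]
      have hreal : 9 * ((s l) ^ (-(2*(n:ℝ)))) * ((R l) ^ n) ^ 2 = 9 * ((8:ℝ) ^ n) ^ 2 := by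
        rw [hR8 l, mul_pow, mul_pow]
        rw [show -(2*(n:ℝ)) = -(((2*n : ℕ) : ℝ)) by push_cast; ring]
        rw [Real.rpow_neg (hs0 l).le, Real.rpow_natCast]
        have hsn : (s l) ^ (2*n) ≠ 0 := pow_ne_zero _ (hs0 l).ne'
        have hpow : ((s l) ^ n) ^ 2 = (s l) ^ (2*n) := by rw [← pow_mul]; ring_nf
        field_simp
        rw [hpow]
      have hk3 : κ ^ 3 = ENNReal.ofReal (κ.toReal ^ 3) := by
        rw [ENNReal.ofReal_pow ENNReal.toReal_nonneg, ENNReal.ofReal_toReal hκt]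
      calc ENNReal.ofReal 9 * κ * ENNReal.ofReal ((s l) ^ (-(2*(n:ℝ)))) *
            (ENNReal.ofReal (((R l) ^ n) ^ 2) * κ ^ 2)
          = (ENNReal.ofReal 9 * ENNReal.ofReal ((s l) ^ (-(2*(n:ℝ)))) *
              ENNReal.ofReal (((R l) ^ n) ^ 2)) * κ ^ 3 := by ring
        _ = ENNReal.ofReal (9 * ((s l) ^ (-(2*(n:ℝ)))) * ((R l) ^ n) ^ 2) * κ ^ 3 := by
            rw [← ENNReal.ofReal_mul (by norm_num),
              ← ENNReal.ofReal_mul (by positivity)]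
        _ = ENNReal.ofReal (9 * ((8:ℝ) ^ n) ^ 2) * ENNReal.ofReal (κ.toReal ^ 3) := by
            rw [hreal, hk3]
        _ = ENNReal.ofReal (9 * ((8:ℝ) ^ n) ^ 2 * κ.toReal ^ 3) := by
            rw [← ENNReal.ofReal_mul (by positivity)]
        _ ≤ ENNReal.ofReal (C ^ 2) := by
            apply ENNReal.ofReal_le_ofReal
            rw [hCdef]
            have hk : (0:ℝ) ≤ κ.toReal := ENNReal.toReal_nonneg
            have hkk : κ.toReal ^ 3 ≤ (κ.toReal ^ 2 + 1) ^ 2 := by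
              nlinarith [sq_nonneg (κ.toReal ^ 2 - κ.toReal), sq_nonneg κ.toReal]
            have h8 : (0:ℝ) < 8 ^ n := by positivity
            calc 9 * ((8:ℝ) ^ n) ^ 2 * κ.toReal ^ 3
                ≤ 9 * ((8:ℝ) ^ n) ^ 2 * (κ.toReal ^ 2 + 1) ^ 2 := by
                  exact mul_le_mul_of_nonneg_left hkk (by positivity)
              _ = (3 * 8 ^ n * (κ.toReal ^ 2 + 1)) ^ 2 := by ring
    have hone : (volume (ball y (R l))) ^ 2 * ((volume (ball y (R l)))⁻¹) ^ 2 = 1 := by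
      rw [← mul_pow, ENNReal.mul_inv_cancel hVne hVnt, one_pow]
    calc ENNReal.ofReal 9 * κ * ENNReal.ofReal ((s l) ^ (-(2*(n:ℝ))))
        = ENNReal.ofReal 9 * κ * ENNReal.ofReal ((s l) ^ (-(2*(n:ℝ)))) *
            ((volume (ball y (R l))) ^ 2 * ((volume (ball y (R l)))⁻¹) ^ 2) := by
          rw [hone, mul_one]
      _ = (ENNReal.ofReal 9 * κ * ENNReal.ofReal ((s l) ^ (-(2*(n:ℝ)))) *
            (volume (ball y (R l))) ^ 2) * ((volume (ball y (R l)))⁻¹) ^ 2 := by ring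
      _ ≤ ENNReal.ofReal (C ^ 2) * ((volume (ball y (R l)))⁻¹) ^ 2 :=
          mul_le_mul_left hXV _
  -- final assembly
  calc Sl2 γ g x = (∑' j, Sgamma γ (g j) x ^ 2) ^ (1/2:ℝ) := rfl
    _ ≤ ((ENNReal.ofReal C * ∑' l : ℕ, (volume (ball y (R l)))⁻¹ *
          ∫⁻ z in ball y (R l), h z) ^ 2) ^ (1/2:ℝ) := by
        refine ENNReal.rpow_le_rpow ?_ (by norm_num)
        calc (∑' j, Sgamma γ (g j) x ^ 2)
            ≤ ∑' j, ∑' l, ENNReal.ofReal 9 * κ * ENNReal.ofReal ((s l) ^ (-(2*(n:ℝ)))) *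
                (∫⁻ z in ball y (R l), ENNReal.ofReal |g j z|) ^ 2 :=
              ENNReal.tsum_le_tsum coneB
          _ = ∑' l, ∑' j, ENNReal.ofReal 9 * κ * ENNReal.ofReal ((s l) ^ (-(2*(n:ℝ)))) *
                (∫⁻ z in ball y (R l), ENNReal.ofReal |g j z|) ^ 2 := ENNReal.tsum_comm
          _ = ∑' l, ENNReal.ofReal 9 * κ * ENNReal.ofReal ((s l) ^ (-(2*(n:ℝ)))) *
                ∑' j, (∫⁻ z in ball y (R l), ENNReal.ofReal |g j z|) ^ 2 :=
              tsum_congr fun l => ENNReal.tsum_mul_left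
          _ ≤ ∑' l, ENNReal.ofReal (C ^ 2) * ((volume (ball y (R l)))⁻¹) ^ 2 *
                (∫⁻ z in ball y (R l), h z) ^ 2 :=
              ENNReal.tsum_le_tsum fun l => mul_le_mul' (hconst l) (hHold l)
          _ = ∑' l, ENNReal.ofReal (C ^ 2) *
                ((volume (ball y (R l)))⁻¹ * ∫⁻ z in ball y (R l), h z) ^ 2 :=
              tsum_congr fun l => by rw [mul_pow]; ring
          _ = ENNReal.ofReal (C ^ 2) *
                ∑' l, ((volume (ball y (R l)))⁻¹ * ∫⁻ z in ball y (R l), h z) ^ 2 :=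
              ENNReal.tsum_mul_left
          _ ≤ ENNReal.ofReal (C ^ 2) *
                (∑' l, (volume (ball y (R l)))⁻¹ * ∫⁻ z in ball y (R l), h z) ^ 2 :=
              mul_le_mul_right (tsum_sq_le_sq_tsum _) _
          _ = (ENNReal.ofReal C * ∑' l, (volume (ball y (R l)))⁻¹ *
                ∫⁻ z in ball y (R l), h z) ^ 2 := by
              rw [ENNReal.ofReal_pow hC0.le]; exact (mul_pow _ _ 2).symm
    _ = ENNReal.ofReal C * ∑' l : ℕ, (volume (ball y (R l)))⁻¹ *
          ∫⁻ z in ball y (R l), h z := ennreal_rpow_half_sq _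

end
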